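/- The family of forest polynomials {β_F}, as F ranges over indexed forests with support in the positive integers, forms a basis of the polynomial ring ℚ[x_1, x_2, ...]. In particular, the monomial x^{c(F)} = ∏_i x_i^{c_i(F)} is the leading term of β_F in reverse lexicographic order. -/

import Mathlib

/-- Plane binary trees. `leaf` is a leaf, `node l r` an internal node. -/
inductive BT where
  | leaf : BT
  | node : BT → BT → BT
deriving DecidableEq

/-- Number of internal nodes. -/
def BT.size : BT → ℕ
  | .leaf => 0
  | .node l r => l.size + r.size + 1

/-- Multiset of values `ρ_F(v)` (canonical label of the leftmost descendant,
reached by following left edges) over the internal nodes of a tree whose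
inorder canonical labels start at `a`. -/
def BT.rhoMS : BT → ℤ → Multiset ℤ
  | .leaf, _ => 0
  | .node l r, a => a ::ₘ (l.rhoMS a + r.rhoMS (a + l.size + 1))

/-- Multiset of canonical labels of internal nodes whose left child is a leaf
("left support"). -/
def BT.lsuppMS : BT → ℤ → Multiset ℤ
  | .leaf, _ => 0
  | .node l r, a =>
      (if l = BT.leaf then ({a} : Multiset ℤ) else 0) + l.lsuppMS a
        + r.lsuppMS (a + l.size + 1)

/-- The flagged generating polynomial of a binary tree with inorder labels
starting at `a`, where every label is at least `lo` (lower bound transmitted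
from the parent), at most the `ρ`-value of the node, labels weakly increase
down left edges and strictly increase down right edges. The variables are
`x_1, x_2, …` (the variable `X 0` is unused). -/
noncomputable def BT.polyAux : BT → ℤ → ℕ → MvPolynomial ℕ ℚ
  | .leaf, _, _ => 1
  | .node l r, a, lo =>
      ∑ k ∈ Finset.Icc lo a.toNat,
        MvPolynomial.X k * l.polyAux a k * r.polyAux (a + l.size + 1) (k + 1)

/-- The forest polynomial of a single indexed tree with support starting at `a`. -/
noncomputable def BT.poly (t : BT) (a : ℤ) : MvPolynomial ℕ ℚ := t.polyAux a 1

/-- An indexed forest: a list of binary trees together with the starting points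
of their supports, the supports being maximal intervals (consecutive supports
leave a gap of at least one integer). -/
structure IndexedForest where
  trees : List (ℤ × BT)
  nonempty : ∀ p ∈ trees, p.2 ≠ BT.leaf
  gaps : trees.Chain' (fun p q => p.1 + (p.2.size : ℤ) + 1 ≤ q.1)

/-- The support of an indexed forest, as a set of integers. -/
def IndexedForest.Supp (F : IndexedForest) : Set ℤ :=
  {i | ∃ p ∈ F.trees, p.1 ≤ i ∧ i < p.1 + (p.2.size : ℤ)}

/-- The multiset of `ρ_F`-values of all internal nodes of `F`. -/
def IndexedForest.rhoMS (F : IndexedForest) : Multiset ℤ :=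
  (F.trees.map (fun p => p.2.rhoMS p.1)).sum

/-- The `ℕ`-vector `c(F)`: `c_i` counts internal nodes with `ρ_F`-value `i`. -/
def cOf (F : IndexedForest) : ℤ → ℕ := fun i => F.rhoMS.count i

/-- The multiset of left-support labels of `F`. -/
def IndexedForest.lsuppMS (F : IndexedForest) : Multiset ℤ :=
  (F.trees.map (fun p => p.2.lsuppMS p.1)).sum

/-- Forest polynomial of a list of located trees. -/
noncomputable def polyL (ts : List (ℤ × BT)) : MvPolynomial ℕ ℚ :=
  (ts.map (fun p => p.2.poly p.1)).prod

/-- The forest polynomial of an indexed forest. -/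
noncomputable def IndexedForest.poly (F : IndexedForest) : MvPolynomial ℕ ℚ :=
  polyL F.trees

/-- Number of internal nodes of a forest. -/
def IndexedForest.size (F : IndexedForest) : ℕ :=
  (F.trees.map (fun p => p.2.size)).sum
/-! ### Auxiliary development -/

set_option maxHeartbeats 1000000

namespace F9

open MvPolynomial

/-- Tail sum of a monomial: sum of entries at indices `≥ T`. -/
def tsum (m : ℕ →₀ ℕ) (T : ℕ) : ℕ := m.sum fun j v => if T ≤ j then v else 0

lemma tsum_zero (T : ℕ) : tsum 0 T = 0 := by simp [tsum]

lemma tsum_add (m n : ℕ →₀ ℕ) (T : ℕ) : tsum (m + n) T = tsum m T + tsum n T :=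
  Finsupp.sum_add_index' (fun _ => by simp) (fun j v w => by split <;> simp)

lemma tsum_single (k v T : ℕ) : tsum (Finsupp.single k v) T = if T ≤ k then v else 0 := by
  unfold tsum
  by_cases hv : v = 0
  · simp [hv]
  · rw [Finsupp.sum_single_index] <;> simp

lemma tsum_eq_sum (m : ℕ →₀ ℕ) (s : Finset ℕ) (h : m.support ⊆ s) (T : ℕ) :
    tsum m T = ∑ j ∈ s, if T ≤ j then m j else 0 := by
  unfold tsum Finsupp.sum
  exact Finset.sum_subset h (fun x _ hx => by
    simp [Finsupp.notMem_support_iff.mp hx])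

lemma tsum_succ (m : ℕ →₀ ℕ) (T : ℕ) : tsum m T = m T + tsum m (T + 1) := by
  rw [tsum_eq_sum m (insert T m.support) (by intro x hx; exact Finset.mem_insert_of_mem hx),
      tsum_eq_sum m (insert T m.support) (by intro x hx; exact Finset.mem_insert_of_mem hx)]
  have : ∀ j ∈ insert T m.support,
      (if T ≤ j then m j else 0) = (if j = T then m j else 0) + (if T + 1 ≤ j then m j else 0) := by
    intro j _
    split_ifs <;> omega
  rw [Finset.sum_congr rfl this, Finset.sum_add_distrib, Finset.sum_ite_eq']
  simp

lemma tsum_congr_ge (m n : ℕ →₀ ℕ) (T : ℕ) (h : ∀ j, T ≤ j → m j = n j) :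
    tsum m T = tsum n T := by
  rw [tsum_eq_sum m (m.support ∪ n.support) Finset.subset_union_left,
      tsum_eq_sum n (m.support ∪ n.support) Finset.subset_union_right]
  refine Finset.sum_congr rfl fun j _ => ?_
  by_cases hT : T ≤ j
  · simp [hT, h j hT]
  · simp [hT]

lemma tsum_inj (m n : ℕ →₀ ℕ) (h : ∀ T, tsum m T = tsum n T) : m = n := by
  ext j
  have h1 := tsum_succ m j
  have h2 := tsum_succ n j
  have h3 := h j
  have h4 := h (j + 1)
  omega

/-- Number of `ρ`-values of `t` (based at `a`) that are `≥ T`. -/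
def tcountT (t : BT) (a : ℤ) (T : ℕ) : ℕ := ((t.rhoMS a).filter (fun x => (T : ℤ) ≤ x)).card

lemma tcountT_leaf (a : ℤ) (T : ℕ) : tcountT .leaf a T = 0 := by
  simp [tcountT, BT.rhoMS]

lemma tcountT_node (l r : BT) (a : ℤ) (T : ℕ) :
    tcountT (.node l r) a T
      = (if (T : ℤ) ≤ a then 1 else 0) + tcountT l a T + tcountT r (a + l.size + 1) T := by
  simp only [tcountT, BT.rhoMS, Multiset.filter_cons, Multiset.filter_add, Multiset.card_add]
  split <;> simp <;> omega

/-- The vector `c(t)` of a tree based at `a`, as a finitely supported function on `ℕ`. -/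
noncomputable def cvecT : BT → ℤ → (ℕ →₀ ℕ)
  | .leaf, _ => 0
  | .node l r, a => Finsupp.single a.toNat 1 + cvecT l a + cvecT r (a + l.size + 1)


lemma cvecT_leaf (a : ℤ) : cvecT .leaf a = 0 := by rw [cvecT]

lemma cvecT_node (l r : BT) (a : ℤ) :
    cvecT (.node l r) a
      = Finsupp.single a.toNat 1 + cvecT l a + cvecT r (a + l.size + 1) := by rw [cvecT]

lemma tsum_cvecT : ∀ (t : BT) (a : ℤ), 1 ≤ a → ∀ T, tsum (cvecT t a) T = tcountT t a T := by
  intro t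
  induction t with
  | leaf => intro a ha T; simp [cvecT_leaf, tsum_zero, tcountT_leaf]
  | node l r ihl ihr =>
    intro a ha T
    rw [cvecT_node, tsum_add, tsum_add, tsum_single, tcountT_node, ihl a ha, ihr _ (by omega)]
    congr 1
    congr 1
    have hiff : T ≤ a.toNat ↔ (T : ℤ) ≤ a := by omega
    by_cases h : T ≤ a.toNat
    · rw [if_pos h, if_pos (hiff.mp h)]
    · rw [if_neg h, if_neg fun hh => h (hiff.mpr hh)]

lemma cvecT_apply (t : BT) : ∀ (a : ℤ), 1 ≤ a → ∀ i : ℕ,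
    cvecT t a i = (t.rhoMS a).count (i : ℤ) := by
  induction t with
  | leaf => intro a ha i; simp [cvecT_leaf, BT.rhoMS]
  | node l r ihl ihr =>
    intro a ha i
    rw [cvecT_node]
    rw [show (BT.node l r).rhoMS a = a ::ₘ (l.rhoMS a + r.rhoMS (a + l.size + 1)) from rfl]
    rw [Multiset.count_cons, Multiset.count_add]
    simp only [Finsupp.add_apply, Finsupp.single_apply]
    rw [ihl a ha i, ihr _ (by omega) i]
    have : (a.toNat = i) ↔ ((i : ℤ) = a) := by omega
    by_cases h : a.toNat = i
    · simp only [if_pos h, if_pos (this.mp h)]; omega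
    · simp only [if_neg h, if_neg (fun hh => h (this.mpr hh))]; omega

lemma total_add (m n : ℕ →₀ ℕ) :
    (m + n).sum (fun _ v => v) = m.sum (fun _ v => v) + n.sum (fun _ v => v) :=
  Finsupp.sum_add_index' (fun _ => rfl) (fun _ _ _ => rfl)

lemma cvecT_total : ∀ (t : BT) (a : ℤ), (cvecT t a).sum (fun _ v => v) = t.size := by
  intro t
  induction t with
  | leaf => intro a; simp [cvecT_leaf, BT.size]
  | node l r ihl ihr =>
    intro a
    rw [cvecT_node, total_add, total_add, ihl, ihr, Finsupp.sum_single_index rfl]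
    simp [BT.size]; omega

lemma cvecT_supp_bound : ∀ (t : BT) (b : ℕ) (i : ℕ),
    cvecT t (b : ℤ) i ≠ 0 → b ≤ i ∧ i < b + t.size := by
  intro t
  induction t with
  | leaf => intro b i h; simp [cvecT_leaf] at h
  | node l r ihl ihr =>
    intro b i h
    rw [cvecT_node] at h
    have hc : ((b:ℤ) + l.size + 1) = ((b + l.size + 1 : ℕ) : ℤ) := by push_cast; ring
    rw [hc] at h
    simp only [Finsupp.add_apply, Finsupp.single_apply, Int.toNat_natCast] at h
    have hsz : (BT.node l r).size = l.size + r.size + 1 := rfl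
    rw [hsz]
    by_cases h1 : b = i
    · omega
    · rw [if_neg h1] at h
      rcases Nat.eq_zero_or_pos (cvecT l (b:ℤ) i) with h2 | h2
      · have h3 : cvecT r ((b + l.size + 1 : ℕ) : ℤ) i ≠ 0 := by omega
        have h4 := ihr _ _ h3
        omega
      · have h4 := ihl b i (by omega)
        omega

lemma mem_support_one {m : ℕ →₀ ℕ} (h : m ∈ (1 : MvPolynomial ℕ ℚ).support) : m = 0 := by
  by_contra hm
  have := MvPolynomial.mem_support_iff.mp h
  rw [MvPolynomial.coeff_one, if_neg (fun h' => hm h'.symm)] at this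
  exact this rfl

lemma supp_polyAux : ∀ (t : BT) (a : ℤ) (lo : ℕ), 1 ≤ lo →
    ∀ m ∈ (t.polyAux a lo).support,
      (∀ j, j < lo → m j = 0) ∧ ∀ T : ℕ, tsum m T ≤ tcountT t a T := by
  intro t
  induction t with
  | leaf =>
    intro a lo hlo m hm
    rw [show BT.leaf.polyAux a lo = 1 from by rw [BT.polyAux]] at hm
    have : m = 0 := mem_support_one hm
    subst this
    exact ⟨fun j _ => rfl, fun T => by simp [tsum_zero]⟩
  | node l r ihl ihr =>
    intro a lo hlo m hm
    rw [show (BT.node l r).polyAux a lo = ∑ k ∈ Finset.Icc lo a.toNat,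
        MvPolynomial.X k * l.polyAux a k * r.polyAux (a + l.size + 1) (k + 1)
      from by rw [BT.polyAux]] at hm
    obtain ⟨k, hk, hm⟩ := Finset.mem_biUnion.mp (MvPolynomial.support_sum hm)
    obtain ⟨hlok, hka⟩ := Finset.mem_Icc.mp hk
    have hk1 : 1 ≤ k := le_trans hlo hlok
    obtain ⟨u, hu, w, hw, huw⟩ := Finset.mem_add.mp (MvPolynomial.support_mul _ _ hm)
    obtain ⟨x, hx, y, hy, hxy⟩ := Finset.mem_add.mp (MvPolynomial.support_mul _ _ hu)
    rw [MvPolynomial.support_X, Finset.mem_singleton] at hx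
    subst hx
    obtain ⟨hy0, hyT⟩ := ihl a k hk1 y hy
    obtain ⟨hw0, hwT⟩ := ihr (a + l.size + 1) (k + 1) (by omega) w hw
    subst hxy; subst huw
    constructor
    · intro j hj
      simp only [Finsupp.add_apply, Finsupp.single_apply]
      rw [if_neg (by omega), hy0 j (by omega), hw0 j (by omega)]
    · intro T
      rw [tsum_add, tsum_add, tsum_single, tcountT_node]
      have h1 : (if T ≤ k then 1 else 0) ≤ (if (T:ℤ) ≤ a then 1 else 0) := by
        by_cases h : T ≤ k
        · rw [if_pos h, if_pos (by omega)]
        · rw [if_neg h]; omega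
      have := hyT T
      have := hwT T
      omega

lemma coeff_cvecT : ∀ (t : BT) (a : ℤ) (lo : ℕ), 1 ≤ lo → ((lo:ℤ) ≤ a ∨ t = .leaf) →
    MvPolynomial.coeff (cvecT t a) (t.polyAux a lo) = 1 := by
  intro t
  induction t with
  | leaf =>
    intro a lo _ _
    rw [show BT.leaf.polyAux a lo = 1 from by rw [BT.polyAux], cvecT_leaf,
      MvPolynomial.coeff_one, if_pos rfl]
  | node l r ihl ihr =>
    intro a lo hlo hcond
    have ha : (lo:ℤ) ≤ a := by
      rcases hcond with h | h
      · exact h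
      · exact absurd h (by simp)
    have ha1 : (1:ℤ) ≤ a := by omega
    have hana : (a.toNat : ℤ) = a := Int.toNat_of_nonneg (by omega)
    rw [show (BT.node l r).polyAux a lo = ∑ k ∈ Finset.Icc lo a.toNat,
        MvPolynomial.X k * l.polyAux a k * r.polyAux (a + l.size + 1) (k + 1)
      from by rw [BT.polyAux], MvPolynomial.coeff_sum]
    rw [Finset.sum_eq_single a.toNat]
    · -- main term
      have hassoc : MvPolynomial.X a.toNat * l.polyAux a a.toNat
          * r.polyAux (a + l.size + 1) (a.toNat + 1)
          = MvPolynomial.X a.toNat * (l.polyAux a a.toNat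
            * r.polyAux (a + l.size + 1) (a.toNat + 1)) := by ring
      rw [hassoc, cvecT_node, add_assoc, MvPolynomial.coeff_X_mul, MvPolynomial.coeff_mul]
      have hmem : (cvecT l a, cvecT r (a + l.size + 1))
          ∈ Finset.HasAntidiagonal.antidiagonal (cvecT l a + cvecT r (a + l.size + 1)) := by
        rw [Finset.HasAntidiagonal.mem_antidiagonal]
      rw [Finset.sum_eq_single_of_mem _ hmem]
      · rw [ihl a a.toNat (by omega) (Or.inl (by omega)),
            ihr (a + l.size + 1) (a.toNat + 1) (by omega) (Or.inl (by push_cast; omega))]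
        norm_num
      · rintro ⟨p1, p2⟩ hp hne
        have hps : p1 + p2 = cvecT l a + cvecT r (a + l.size + 1) :=
          Finset.HasAntidiagonal.mem_antidiagonal.mp hp
        by_contra hne0
        have h1 : MvPolynomial.coeff p1 (l.polyAux a a.toNat) ≠ 0 := fun h => hne0 (by simp [h])
        have h2 : MvPolynomial.coeff p2 (r.polyAux (a + l.size + 1) (a.toNat + 1)) ≠ 0 :=
          fun h => hne0 (by simp [h])
        obtain ⟨_, hT1⟩ := supp_polyAux l a a.toNat (by omega) p1
          (MvPolynomial.mem_support_iff.mpr h1)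
        obtain ⟨_, hT2⟩ := supp_polyAux r (a + l.size + 1) (a.toNat + 1) (by omega) p2
          (MvPolynomial.mem_support_iff.mpr h2)
        have heq1 : p1 = cvecT l a := by
          apply tsum_inj
          intro T
          have e1 : tsum (p1 + p2) T = tsum (cvecT l a + cvecT r (a + l.size + 1)) T := by
            rw [hps]
          rw [tsum_add, tsum_add] at e1
          have e2 := tsum_cvecT l a ha1 T
          have e3 := tsum_cvecT r (a + l.size + 1) (by omega) T
          have := hT1 T
          have := hT2 T
          omega
        have heq2 : p2 = cvecT r (a + l.size + 1) := by
          apply tsum_inj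
          intro T
          have e1 : tsum (p1 + p2) T = tsum (cvecT l a + cvecT r (a + l.size + 1)) T := by
            rw [hps]
          rw [tsum_add, tsum_add] at e1
          have e2 := tsum_cvecT l a ha1 T
          have e3 := tsum_cvecT r (a + l.size + 1) (by omega) T
          have := hT1 T
          have := hT2 T
          omega
        subst heq1
        subst heq2
        exact hne rfl
    · -- other k's vanish
      intro k hk hkne
      obtain ⟨hlok, hka⟩ := Finset.mem_Icc.mp hk
      have hklt : k < a.toNat := lt_of_le_of_ne hka hkne
      by_contra h0
      have hm : cvecT (BT.node l r) a ∈
          (MvPolynomial.X k * l.polyAux a k * r.polyAux (a + l.size + 1) (k + 1)).support :=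
        MvPolynomial.mem_support_iff.mpr h0
      obtain ⟨u, hu, w, hw, huw⟩ := Finset.mem_add.mp (MvPolynomial.support_mul _ _ hm)
      obtain ⟨x, hx, y, hy, hxy⟩ := Finset.mem_add.mp (MvPolynomial.support_mul _ _ hu)
      rw [MvPolynomial.support_X, Finset.mem_singleton] at hx
      subst hx
      obtain ⟨_, hyT⟩ := supp_polyAux l a k (by omega) y hy
      obtain ⟨_, hwT⟩ := supp_polyAux r (a + l.size + 1) (k + 1) (by omega) w hw
      have hts : tsum (cvecT (BT.node l r) a) a.toNat
          = tcountT (BT.node l r) a a.toNat := tsum_cvecT _ a ha1 _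
      rw [tcountT_node, if_pos (by omega)] at hts
      have e1 : tsum (cvecT (BT.node l r) a) a.toNat
          = tsum (Finsupp.single k 1) a.toNat + tsum y a.toNat + tsum w a.toNat := by
        rw [← huw, ← hxy, tsum_add, tsum_add]
      rw [tsum_single, if_neg (by omega)] at e1
      have := hyT a.toNat
      have := hwT a.toNat
      have e2 := tsum_cvecT l a ha1 a.toNat
      have e3 := tsum_cvecT r (a + l.size + 1) (by omega) a.toNat
      omega
    · intro hnot
      exact absurd (Finset.mem_Icc.mpr ⟨by omega, le_refl _⟩) hnot

/-! ### List level -/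

/-- Sum of the `cvecT` of the trees of a located list. -/
noncomputable def cvecL (ts : List (ℤ × BT)) : ℕ →₀ ℕ :=
  (ts.map (fun p => cvecT p.2 p.1)).sum

def tcountL (ts : List (ℤ × BT)) (T : ℕ) : ℕ :=
  (ts.map (fun p => tcountT p.2 p.1 T)).sum

@[simp] lemma cvecL_nil : cvecL [] = 0 := rfl

lemma cvecL_cons (p : ℤ × BT) (ts : List (ℤ × BT)) :
    cvecL (p :: ts) = cvecT p.2 p.1 + cvecL ts := by simp [cvecL]

lemma tcountL_cons (p : ℤ × BT) (ts : List (ℤ × BT)) (T : ℕ) :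
    tcountL (p :: ts) T = tcountT p.2 p.1 T + tcountL ts T := by simp [tcountL]

lemma tsum_cvecL : ∀ (ts : List (ℤ × BT)), (∀ p ∈ ts, (1:ℤ) ≤ p.1) → ∀ T,
    tsum (cvecL ts) T = tcountL ts T := by
  intro ts
  induction ts with
  | nil => intro _ T; simp [tsum_zero, tcountL]
  | cons p ts ih =>
    intro h T
    rw [cvecL_cons, tcountL_cons, tsum_add, tsum_cvecT p.2 p.1 (h p (by simp)) T,
      ih (fun q hq => h q (by simp [hq])) T]

lemma polyL_nil : polyL [] = 1 := rfl

lemma polyL_cons (p : ℤ × BT) (ts : List (ℤ × BT)) :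
    polyL (p :: ts) = p.2.poly p.1 * polyL ts := by simp [polyL]

lemma supp_polyL : ∀ (ts : List (ℤ × BT)), (∀ p ∈ ts, (1:ℤ) ≤ p.1) →
    ∀ m ∈ (polyL ts).support, m 0 = 0 ∧ ∀ T, tsum m T ≤ tcountL ts T := by
  intro ts
  induction ts with
  | nil =>
    intro _ m hm
    rw [polyL_nil] at hm
    have : m = 0 := mem_support_one hm
    subst this
    exact ⟨rfl, fun T => by simp [tsum_zero]⟩
  | cons p ts ih =>
    intro h m hm
    rw [polyL_cons] at hm
    obtain ⟨u, hu, w, hw, huw⟩ := Finset.mem_add.mp (MvPolynomial.support_mul _ _ hm)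
    have h1 : (1:ℤ) ≤ p.1 := h p (by simp)
    obtain ⟨hu0, huT⟩ := supp_polyAux p.2 p.1 1 le_rfl u hu
    obtain ⟨hw0, hwT⟩ := ih (fun q hq => h q (by simp [hq])) w hw
    subst huw
    constructor
    · simp [hu0 0 (by omega), hw0]
    · intro T
      rw [tsum_add, tcountL_cons]
      have := huT T
      have := hwT T
      omega

lemma coeff_cvecL : ∀ (ts : List (ℤ × BT)), (∀ p ∈ ts, (1:ℤ) ≤ p.1) →
    MvPolynomial.coeff (cvecL ts) (polyL ts) = 1 := by
  intro ts
  induction ts with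
  | nil => intro _; rw [polyL_nil, cvecL_nil, MvPolynomial.coeff_one, if_pos rfl]
  | cons p ts ih =>
    intro h
    have h1 : (1:ℤ) ≤ p.1 := h p (by simp)
    have hrest : ∀ q ∈ ts, (1:ℤ) ≤ q.1 := fun q hq => h q (by simp [hq])
    rw [polyL_cons, cvecL_cons, MvPolynomial.coeff_mul]
    have hmem : (cvecT p.2 p.1, cvecL ts)
        ∈ Finset.HasAntidiagonal.antidiagonal (cvecT p.2 p.1 + cvecL ts) := by
      rw [Finset.HasAntidiagonal.mem_antidiagonal]
    rw [Finset.sum_eq_single_of_mem _ hmem]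
    · rw [ih hrest]
      have : p.2.poly p.1 = p.2.polyAux p.1 1 := rfl
      rw [this, coeff_cvecT p.2 p.1 1 le_rfl (Or.inl h1)]
      norm_num
    · rintro ⟨p1, p2⟩ hp hne
      have hps : p1 + p2 = cvecT p.2 p.1 + cvecL ts := Finset.HasAntidiagonal.mem_antidiagonal.mp hp
      by_contra hne0
      have hc1 : MvPolynomial.coeff p1 (p.2.polyAux p.1 1) ≠ 0 := fun hz => hne0 (by simp [BT.poly, hz])
      have hc2 : MvPolynomial.coeff p2 (polyL ts) ≠ 0 := fun hz => hne0 (by simp [hz])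
      obtain ⟨_, hT1⟩ := supp_polyAux p.2 p.1 1 le_rfl p1 (MvPolynomial.mem_support_iff.mpr hc1)
      obtain ⟨_, hT2⟩ := supp_polyL ts hrest p2 (MvPolynomial.mem_support_iff.mpr hc2)
      have heq1 : p1 = cvecT p.2 p.1 := by
        apply tsum_inj
        intro T
        have e1 : tsum (p1 + p2) T = tsum (cvecT p.2 p.1 + cvecL ts) T := by rw [hps]
        rw [tsum_add, tsum_add] at e1
        have e2 := tsum_cvecT p.2 p.1 h1 T
        have e3 := tsum_cvecL ts hrest T
        have := hT1 T
        have := hT2 T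
        omega
      have heq2 : p2 = cvecL ts := by
        apply tsum_inj
        intro T
        have e1 : tsum (p1 + p2) T = tsum (cvecT p.2 p.1 + cvecL ts) T := by rw [hps]
        rw [tsum_add, tsum_add] at e1
        have e2 := tsum_cvecT p.2 p.1 h1 T
        have e3 := tsum_cvecL ts hrest T
        have := hT1 T
        have := hT2 T
        omega
      subst heq1; subst heq2; exact hne rfl

/-- The revlex-maximality of `cvecL ts` among the monomials of `polyL ts`. -/
lemma leading (ts : List (ℤ × BT)) (h : ∀ p ∈ ts, (1:ℤ) ≤ p.1) :
    ∀ m ∈ (polyL ts).support, m ≠ cvecL ts →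
      ∃ i : ℕ, (∀ j, i < j → m j = cvecL ts j) ∧ m i < cvecL ts i := by
  intro m hm hne
  set c := cvecL ts with hc
  have hd : ((m.support ∪ c.support).filter (fun j => m j ≠ c j)).Nonempty := by
    by_contra hempty
    apply hne
    ext j
    by_contra hj
    have hj1 : j ∈ m.support ∪ c.support := by
      rcases Nat.eq_zero_or_pos (m j) with h0 | h0
      · refine Finset.mem_union_right _ (Finsupp.mem_support_iff.mpr ?_)
        omega
      · exact Finset.mem_union_left _ (Finsupp.mem_support_iff.mpr (by omega))
    exact hempty ⟨j, Finset.mem_filter.mpr ⟨hj1, hj⟩⟩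
  set i := ((m.support ∪ c.support).filter (fun j => m j ≠ c j)).max' hd with hi
  have hgt : ∀ j, i < j → m j = c j := by
    intro j hj
    by_contra hj'
    have hj1 : j ∈ (m.support ∪ c.support).filter (fun j => m j ≠ c j) := by
      refine Finset.mem_filter.mpr ⟨?_, hj'⟩
      rcases Nat.eq_zero_or_pos (m j) with h0 | h0
      · exact Finset.mem_union_right _ (Finsupp.mem_support_iff.mpr (by omega))
      · exact Finset.mem_union_left _ (Finsupp.mem_support_iff.mpr (by omega))
    exact absurd (Finset.le_max' _ j hj1) (by omega)
  have hne_i : m i ≠ c i := (Finset.mem_filter.mp (Finset.max'_mem _ hd)).2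
  refine ⟨i, hgt, ?_⟩
  have h1 : tsum m (i+1) = tsum c (i+1) := tsum_congr_ge m c (i+1) (fun j hj => hgt j (by omega))
  have h2 : tsum m i ≤ tcountL ts i := (supp_polyL ts h m hm).2 i
  have h3 : tsum c i = tcountL ts i := tsum_cvecL ts h i
  have h4 := tsum_succ m i
  have h5 := tsum_succ c i
  omega

/-! ### Prefix sums and block extraction -/

/-- Prefix sum of `c` on the window `[a, a+j)`. -/
def pref (c : ℕ →₀ ℕ) (a j : ℕ) : ℕ := ∑ i ∈ Finset.range j, c (a + i)

@[simp] lemma pref_zero (c : ℕ →₀ ℕ) (a : ℕ) : pref c a 0 = 0 := by simp [pref]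

lemma pref_succ (c : ℕ →₀ ℕ) (a j : ℕ) : pref c a (j + 1) = pref c a j + c (a + j) := by
  simp [pref, Finset.sum_range_succ]

lemma pref_add_right (c : ℕ →₀ ℕ) (a s j : ℕ) :
    pref c a (s + j) = pref c a s + pref c (a + s) j := by
  simp only [pref, Finset.sum_range_add]
  congr 1
  refine Finset.sum_congr rfl fun i _ => ?_
  congr 1
  omega

lemma pref_congr' {c d : ℕ →₀ ℕ} (a j : ℕ) (h : ∀ i, i < j → c (a + i) = d (a + i)) :
    pref c a j = pref d a j :=
  Finset.sum_congr rfl fun i hi => h i (Finset.mem_range.mp hi)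

lemma pref_add (c d : ℕ →₀ ℕ) (a j : ℕ) : pref (c + d) a j = pref c a j + pref d a j := by
  simp [pref, Finset.sum_add_distrib]

lemma sum_le_total (c : ℕ →₀ ℕ) (s : Finset ℕ) :
    ∑ i ∈ s, c i ≤ c.sum (fun _ v => v) := by
  rw [Finsupp.sum]
  have h1 : ∑ i ∈ s, c i = ∑ i ∈ s ∩ c.support, c i := by
    refine (Finset.sum_subset Finset.inter_subset_left fun x hx hx' => ?_).symm
    have : x ∉ c.support := fun hc => hx' (Finset.mem_inter.mpr ⟨hx, hc⟩)
    exact Finsupp.notMem_support_iff.mp this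
  rw [h1]
  exact Finset.sum_le_sum_of_subset Finset.inter_subset_right

lemma pref_le_total (c : ℕ →₀ ℕ) (a j : ℕ) : pref c a j ≤ c.sum (fun _ v => v) := by
  have h1 : pref c a j = ∑ i ∈ (Finset.range j).image (fun i => a + i), c i := by
    rw [Finset.sum_image (fun x _ y _ h => by omega)]
    rfl
  rw [h1]
  exact sum_le_total c _

lemma pref_supp_bound (c : ℕ →₀ ℕ) (a j : ℕ) (hj : ∀ i ∈ c.support, i < a + j)
    (ha : ∀ i, i < a → c i = 0) : pref c a j = c.sum (fun _ v => v) := by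
  rw [Finsupp.sum]
  have h1 : pref c a j = ∑ i ∈ (Finset.range j).image (fun i => a + i), c i := by
    rw [Finset.sum_image (fun x _ y _ h => by omega)]
    rfl
  rw [h1]
  refine (Finset.sum_subset ?_ fun x hx hx' => Finsupp.notMem_support_iff.mp hx').symm
  intro i hi
  have h2 := hj i hi
  have h3 : a ≤ i := by
    by_contra h
    exact Finsupp.mem_support_iff.mp hi (ha i (by omega))
  exact Finset.mem_image.mpr ⟨i - a, Finset.mem_range.mpr (by omega), by omega⟩

lemma pref_zero_of_supp_ge (c : ℕ →₀ ℕ) (a j b : ℕ) (h : ∀ i, c i ≠ 0 → b ≤ i)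
    (hj : a + j ≤ b) : pref c a j = 0 := by
  apply Finset.sum_eq_zero
  intro i hi
  have := Finset.mem_range.mp hi
  by_contra hne
  have := h _ hne
  omega

/-- Existence of a stopping point for the block extraction. -/
lemma exists_stop (c : ℕ →₀ ℕ) (a : ℕ) : ∃ j, pref c a j ≤ j ∧ c (a + j) = 0 := by
  set D := (c.support.sup id) + 1 with hD
  refine ⟨c.sum (fun _ v => v) + D, le_trans (pref_le_total _ _ _) (by omega), ?_⟩
  by_contra h
  have h1 : a + (c.sum (fun _ v => v) + D) ∈ c.support := Finsupp.mem_support_iff.mpr h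
  have h2 := Finset.le_sup (f := id) h1
  simp only [id] at h2
  omega

/-- The block length at `a`: least `j` with `pref c a j ≤ j` and `c (a+j) = 0`. -/
noncomputable def blk (c : ℕ →₀ ℕ) (a : ℕ) : ℕ := Nat.find (exists_stop c a)

lemma blk_le (c : ℕ →₀ ℕ) (a : ℕ) {j : ℕ} (h : pref c a j ≤ j ∧ c (a + j) = 0) :
    blk c a ≤ j := Nat.find_le h

lemma blk_not_lt (c : ℕ →₀ ℕ) (a : ℕ) {j : ℕ} (h : j < blk c a) :
    ¬ (pref c a j ≤ j ∧ c (a + j) = 0) := Nat.find_min (exists_stop c a) h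

lemma blk_spec (c : ℕ →₀ ℕ) (a : ℕ) :
    pref c a (blk c a) ≤ blk c a ∧ c (a + blk c a) = 0 := Nat.find_spec (exists_stop c a)

/-- Up to the block length, prefix sums dominate. -/
lemma blk_ballot (c : ℕ →₀ ℕ) (a : ℕ) : ∀ j, j ≤ blk c a → j ≤ pref c a j := by
  intro j
  induction j with
  | zero => intro _; omega
  | succ j ih =>
    intro hj
    have h1 := ih (by omega)
    have h2 := blk_not_lt c a (show j < blk c a by omega)
    rw [pref_succ]
    by_cases h3 : c (a + j) = 0
    · have : ¬ pref c a j ≤ j := fun h => h2 ⟨h, h3⟩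
      omega
    · omega

lemma blk_pref (c : ℕ →₀ ℕ) (a : ℕ) : pref c a (blk c a) = blk c a :=
  le_antisymm (blk_spec c a).1 (blk_ballot c a _ le_rfl)

lemma blk_zero_at (c : ℕ →₀ ℕ) (a : ℕ) : c (a + blk c a) = 0 := (blk_spec c a).2

/-- If the prefix sum dips strictly below the diagonal at `N`, the block ends before `N`. -/
lemma blk_lt_of_lt (c : ℕ →₀ ℕ) (a N : ℕ) (h : pref c a N < N) : blk c a < N := by
  have hex : ∃ j, pref c a j < j := ⟨N, h⟩
  set j' := Nat.find hex with hj'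
  have hspec : pref c a j' < j' := Nat.find_spec hex
  have hj'N : j' ≤ N := Nat.find_le h
  have hj1 : 1 ≤ j' := by
    by_contra h1
    have : j' = 0 := by omega
    rw [this] at hspec
    simp at hspec
  have hmin : ¬ pref c a (j' - 1) < j' - 1 := Nat.find_min hex (by omega)
  have hps : pref c a (j' - 1 + 1) = pref c a (j' - 1) + c (a + (j' - 1)) := pref_succ c a _
  have h2 : j' - 1 + 1 = j' := by omega
  rw [h2] at hps
  have hz : c (a + (j' - 1)) = 0 := by omega
  have hle : pref c a (j' - 1) ≤ j' - 1 := by omega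
  have := blk_le c a ⟨hle, hz⟩
  omega

/-- A uniqueness characterisation for `blk`. -/
lemma blk_eq_of (c : ℕ →₀ ℕ) (a n : ℕ)
    (h1 : pref c a n ≤ n ∧ c (a + n) = 0)
    (h2 : ∀ j, j < n → ¬ (pref c a j ≤ j ∧ c (a + j) = 0)) : blk c a = n := by
  have hle := blk_le c a h1
  by_contra hne
  exact h2 _ (by omega) ⟨(blk_spec c a).1, (blk_spec c a).2⟩

/-! ### Construction of a tree from a ballot vector -/

/-- `c` restricted to `[a, a+n)` is the vector of a tree block. -/
def Good (c : ℕ →₀ ℕ) (a n : ℕ) : Prop :=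
  pref c a n = n ∧ (∀ j, j ≤ n → j ≤ pref c a j) ∧
    (∀ j, j < n → pref c a j = j → c (a + j) ≠ 0)

noncomputable def mkT : ℕ → (ℕ →₀ ℕ) → ℕ → BT
  | 0, _, _ => .leaf
  | (n+1), c, a =>
    .node (mkT (min (blk (c - Finsupp.single a 1) a) n) (c - Finsupp.single a 1) a)
      (mkT (n - min (blk (c - Finsupp.single a 1) a) n) c
        (a + min (blk (c - Finsupp.single a 1) a) n + 1))
  termination_by n => n
  decreasing_by all_goals omega

lemma pref_one (c : ℕ →₀ ℕ) (a : ℕ) : pref c a 1 = c a := by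
  simp [pref]

lemma dec_apply (c : ℕ →₀ ℕ) (a x : ℕ) :
    ((c - Finsupp.single a 1 : ℕ →₀ ℕ)) x = c x - (if a = x then 1 else 0) := by
  rw [Finsupp.tsub_apply, Finsupp.single_apply]

lemma pref_dec (c : ℕ →₀ ℕ) (a j : ℕ) (hca : 1 ≤ c a) (hj : 1 ≤ j) :
    pref (c - Finsupp.single a 1) a j + 1 = pref c a j := by
  have h1 : pref c a j = pref c a 1 + pref c (a + 1) (j - 1) := by
    have := pref_add_right c a 1 (j - 1)
    rw [show 1 + (j-1) = j by omega] at this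
    exact this
  have h2 : pref (c - Finsupp.single a 1) a j
      = pref (c - Finsupp.single a 1) a 1 + pref (c - Finsupp.single a 1) (a + 1) (j - 1) := by
    have := pref_add_right (c - Finsupp.single a 1) a 1 (j - 1)
    rw [show 1 + (j-1) = j by omega] at this
    exact this
  have h3 : pref (c - Finsupp.single a 1) (a + 1) (j - 1) = pref c (a + 1) (j - 1) := by
    apply pref_congr'
    intro i _
    rw [dec_apply, if_neg (by omega)]
    omega
  rw [h1, h2, h3, pref_one, pref_one, dec_apply, if_pos rfl]
  omega

lemma mkT_spec : ∀ n c a, Good c a n →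
    (mkT n c a).size = n ∧
    cvecT (mkT n c a) (a : ℤ) = c.filter (fun i => a ≤ i ∧ i < a + n) := by
  intro n
  induction n using Nat.strong_induction_on with
  | _ n ih =>
    match n with
    | 0 =>
      intro c a _
      constructor
      · rw [mkT]; rfl
      · rw [mkT, cvecT_leaf]
        ext i
        rw [Finsupp.filter_apply]
        rw [if_neg (by omega)]
        rfl
    | (n+1) =>
      intro c a hG
      obtain ⟨hG1, hG2, hG3⟩ := hG
      set c' := c - Finsupp.single a 1 with hc'
      have hca : 1 ≤ c a := by
        have := hG2 1 (by omega)
        rw [pref_one] at this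
        exact this
      have hpd : ∀ j, 1 ≤ j → pref c' a j + 1 = pref c a j := fun j hj => pref_dec c a j hca hj
      have hslt : blk c' a < n + 1 := by
        apply blk_lt_of_lt
        have := hpd (n+1) (by omega)
        omega
      set s := blk c' a with hs
      have hsn : s ≤ n := by omega
      have hmin : min s n = s := min_eq_left hsn
      have hc'z : c' (a + s) = 0 := blk_zero_at c' a
      have hz2 : 1 ≤ s → c (a + s) = 0 := by
        intro h1
        have hda := dec_apply c a (a + s)
        rw [← hc', if_neg (by omega)] at hda
        omega
      have hz0 : s = 0 → c a = 1 := by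
        intro h0
        rw [h0] at hc'z
        have hda := dec_apply c a (a + 0)
        rw [← hc', if_pos (show a = a + 0 by omega)] at hda
        simp only [Nat.add_zero] at hda hc'z
        omega
      have hGL : Good c' a s :=
        ⟨blk_pref c' a, fun j hj => blk_ballot c' a j hj,
         fun j hj hpj => by
          have := blk_not_lt c' a (show j < blk c' a from hj)
          intro hzz
          exact this ⟨by omega, hzz⟩⟩
      have hps1 : pref c a (s + 1) = s + 1 := by
        have h1 := pref_succ c' a s
        rw [blk_pref c' a, hc'z] at h1
        have := hpd (s+1) (by omega)
        omega
      have hsplit : ∀ j, pref c a (s + 1 + j) = (s + 1) + pref c (a + s + 1) j := by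
        intro j
        have := pref_add_right c a (s+1) j
        rw [hps1] at this
        rw [show a + (s + 1) = a + s + 1 by omega] at this
        exact this
      have hGR : Good c (a + s + 1) (n - s) := by
        refine ⟨?_, ?_, ?_⟩
        · have := hsplit (n - s)
          rw [show s + 1 + (n - s) = n + 1 by omega, hG1] at this
          omega
        · intro j hj
          have h1 := hsplit j
          have h2 := hG2 (s + 1 + j) (by omega)
          omega
        · intro j hj hpj
          have h1 := hsplit j
          have h2 := hG3 (s + 1 + j) (by omega) (by omega)
          rw [show a + (s + 1 + j) = a + s + 1 + j by omega] at h2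
          exact h2
      have ihl := ih s (by omega) c' a hGL
      have ihr := ih (n - s) (by omega) c (a + s + 1) hGR
      have heq : mkT (n+1) c a = .node (mkT s c' a) (mkT (n - s) c (a + s + 1)) := by
        rw [mkT]
        rw [← hc', hmin]
      constructor
      · rw [heq]
        have : (BT.node (mkT s c' a) (mkT (n - s) c (a + s + 1))).size
            = (mkT s c' a).size + (mkT (n - s) c (a + s + 1)).size + 1 := rfl
        rw [this, ihl.1, ihr.1]
        omega
      · rw [heq, cvecT_node, ihl.1, ihl.2]
        have hcast : ((a:ℤ) + (s:ℕ) + 1) = ((a + s + 1 : ℕ) : ℤ) := by push_cast; ring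
        rw [hcast, ihr.2]
        ext i
        simp only [Finsupp.add_apply, Finsupp.filter_apply, Finsupp.single_apply,
          Int.toNat_natCast]
        have hc'i : c' i = c i - (if a = i then 1 else 0) := dec_apply c a i
        by_cases hia : a = i
        · subst hia
          rw [hc'i]
          split_ifs <;> omega
        · rw [hc'i, if_neg hia]
          by_cases his : i = a + s
          · subst his
            have hzz : 1 ≤ s → c (a + s) = 0 := hz2
            split_ifs <;> omega
          · split_ifs <;> omega

/-! ### Construction of a forest from a vector -/

lemma blk_good (c : ℕ →₀ ℕ) (a : ℕ) : Good c a (blk c a) :=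
  ⟨blk_pref c a, fun j hj => blk_ballot c a j hj,
   fun j hj hpj hzz => blk_not_lt c a hj ⟨by omega, hzz⟩⟩

lemma val_le_total (c : ℕ →₀ ℕ) (i : ℕ) : c i ≤ c.sum (fun _ v => v) := by
  have := sum_le_total c {i}
  simpa using this

lemma total_eq_zero {c : ℕ →₀ ℕ} (h : c.sum (fun _ v => v) = 0) : c = 0 := by
  ext i
  have := val_le_total c i
  simp only [Finsupp.coe_zero, Pi.zero_apply]
  omega

noncomputable def mkL : ℕ → (ℕ →₀ ℕ) → List (ℤ × BT)
  | 0, _ => []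
  | (f+1), c =>
    if h : c = 0 then [] else
      ((((c.support.min' (Finsupp.support_nonempty_iff.mpr h)) : ℕ) : ℤ),
        mkT (blk c (c.support.min' (Finsupp.support_nonempty_iff.mpr h))) c
          (c.support.min' (Finsupp.support_nonempty_iff.mpr h))) ::
      mkL f (Finsupp.filter
        (fun i => ¬ i < (c.support.min' (Finsupp.support_nonempty_iff.mpr h))
          + blk c (c.support.min' (Finsupp.support_nonempty_iff.mpr h))) c)

lemma mkL_spec : ∀ (f : ℕ) (c : ℕ →₀ ℕ), (c.sum fun _ v => v) ≤ f → c 0 = 0 →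
    (∀ p ∈ mkL f c, p.2 ≠ BT.leaf ∧ (1:ℤ) ≤ p.1) ∧
    (mkL f c).Chain' (fun p q => p.1 + (p.2.size : ℤ) + 1 ≤ q.1) ∧
    cvecL (mkL f c) = c ∧
    (∀ p ∈ mkL f c, ∀ b : ℕ, (∀ j, j < b → c j = 0) → (b:ℤ) ≤ p.1) := by
  intro f
  induction f with
  | zero =>
    intro c hc h0
    have : c = 0 := total_eq_zero (by omega)
    subst this
    refine ⟨by simp [mkL], by simp [mkL, List.Chain'], by simp [mkL], by simp [mkL]⟩
  | succ f ih =>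
    intro c hc h0
    by_cases h : c = 0
    · subst h
      refine ⟨?_, ?_, ?_, ?_⟩ <;> simp [mkL, List.Chain']
    · set hne := Finsupp.support_nonempty_iff.mpr h with hhne
      set a := c.support.min' hne with ha
      set n := blk c a with hn
      set rest := Finsupp.filter (fun i => ¬ i < a + n) c with hrest
      have heq : mkL (f+1) c = ((a : ℤ), mkT n c a) :: mkL f rest := by
        rw [mkL, dif_neg h]
      have hca : c a ≠ 0 := Finsupp.mem_support_iff.mp (c.support.min'_mem hne)
      have ha_lb : ∀ i, c i ≠ 0 → a ≤ i := fun i hi =>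
        c.support.min'_le i (Finsupp.mem_support_iff.mpr hi)
      have ha1 : 1 ≤ a := by
        rcases Nat.eq_zero_or_pos a with h' | h'
        · rw [h'] at hca; exact absurd h0 hca
        · exact h'
      have hn1 : 1 ≤ n := by
        rcases Nat.eq_zero_or_pos n with h' | h'
        · have := blk_zero_at c a
          rw [← hn, h', Nat.add_zero] at this
          exact absurd this hca
        · exact h'
      have hspec := mkT_spec n c a (hn ▸ blk_good c a)
      have hsize : (mkT n c a).size = n := hspec.1
      have hwindow : cvecT (mkT n c a) (a:ℤ) = Finsupp.filter (fun i => i < a + n) c := by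
        rw [hspec.2]
        ext i
        rw [Finsupp.filter_apply, Finsupp.filter_apply]
        by_cases h1 : i < a + n
        · by_cases h2 : a ≤ i
          · rw [if_pos ⟨h2, h1⟩, if_pos h1]
          · rw [if_neg (fun hh => h2 hh.1), if_pos h1]
            by_contra hcon
            exact h2 (ha_lb i (fun hz => hcon hz.symm))
        · rw [if_neg (fun hh => h1 hh.2), if_neg h1]
      have hsplit : Finsupp.filter (fun i => i < a + n) c + rest = c :=
        Finsupp.filter_pos_add_filter_neg c _
      have hrest_apply : ∀ i, rest i = if ¬ i < a + n then c i else 0 := fun i =>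
        Finsupp.filter_apply _ c i
      have hrest0 : ∀ j, j < a + n → rest j = 0 := by
        intro j hj
        rw [hrest_apply j, if_neg (by omega)]
      have hrestan : rest (a + n) = 0 := by
        rw [hrest_apply, if_pos (by omega)]
        exact hn ▸ blk_zero_at c a
      have hrest_le : ∀ i, rest i ≤ c i := by
        intro i
        rw [hrest_apply]
        split <;> omega
      have htot : rest.sum (fun _ v => v) ≤ f := by
        have h1 : (Finsupp.filter (fun i => i < a + n) c).sum (fun _ v => v)
            + rest.sum (fun _ v => v) = c.sum (fun _ v => v) := by
          rw [← total_add, hsplit]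
        have h2 : (Finsupp.filter (fun i => i < a + n) c) a = c a := by
          rw [Finsupp.filter_apply, if_pos (by omega)]
        have h3 := val_le_total (Finsupp.filter (fun i => i < a + n) c) a
        omega
      have hrest0' : rest 0 = 0 := by
        rw [hrest_apply]
        split <;> omega
      obtain ⟨ih1, ih2, ih3, ih4⟩ := ih rest htot hrest0'
      rw [heq]
      refine ⟨?_, ?_, ?_, ?_⟩
      · rintro p hp
        rcases List.mem_cons.mp hp with h' | h'
        · subst h'
          constructor
          · intro hleaf
            simp only at hleaf
            rw [hleaf] at hsize
            simp [BT.size] at hsize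
            omega
          · simp only
            exact_mod_cast (by exact_mod_cast ha1 : (1:ℤ) ≤ (a:ℤ))
        · exact ih1 p h'
      · refine List.isChain_cons.mpr ⟨?_, ih2⟩
        intro q hq
        have hmem := List.mem_of_mem_head? hq
        have hb : ∀ j, j < a + n + 1 → rest j = 0 := by
          intro j hj
          rcases Nat.lt_or_ge j (a + n) with h' | h'
          · exact hrest0 j h'
          · have : j = a + n := by omega
            rw [this]
            exact hrestan
        have := ih4 q hmem (a + n + 1) hb
        simp only [hsize]
        push_cast at this ⊢
        omega
      · rw [cvecL_cons]
        simp only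
        rw [hwindow, ih3]
        exact hsplit
      · rintro p hp b hb
        rcases List.mem_cons.mp hp with h' | h'
        · subst h'
          simp only
          have : b ≤ a := by
            by_contra hcon
            exact hca (hb a (by omega))
          exact_mod_cast (by exact_mod_cast this : (b:ℤ) ≤ (a:ℤ))
        · refine ih4 p h' b ?_
          intro j hj
          have := hrest_le j
          have := hb j hj
          omega

/-! ### Uniqueness: a forest is determined by its vector -/

lemma BT_size_pos {t : BT} (h : t ≠ BT.leaf) : 1 ≤ t.size := by
  cases t with
  | leaf => exact absurd rfl h
  | node l r => simp [BT.size]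

lemma pref_single_self (a v : ℕ) : ∀ j, pref (Finsupp.single a v) a j = if 1 ≤ j then v else 0 := by
  intro j
  induction j with
  | zero => simp
  | succ j ih =>
    rw [pref_succ, ih, Finsupp.single_apply]
    split_ifs <;> omega

lemma cvecT_node_pos (l r : BT) (a : ℕ) : (cvecT (BT.node l r) (a:ℤ)) a ≠ 0 := by
  rw [cvecT_node]
  rw [Finsupp.add_apply, Finsupp.add_apply]
  have h1 : (Finsupp.single ((a:ℤ)).toNat 1 : ℕ →₀ ℕ) a = 1 := by
    rw [Int.toNat_natCast, Finsupp.single_eq_same]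
  rw [h1]
  omega

/-- The ballot properties of the vector of a tree. -/
lemma treeP : ∀ (t : BT) (a : ℕ), 1 ≤ a →
    (∀ j, j ≤ t.size → j ≤ pref (cvecT t (a:ℤ)) a j) ∧
    pref (cvecT t (a:ℤ)) a t.size = t.size ∧
    (∀ j, j < t.size → pref (cvecT t (a:ℤ)) a j = j → (cvecT t (a:ℤ)) (a + j) ≠ 0) := by
  intro t
  induction t with
  | leaf =>
    intro a _
    refine ⟨?_, ?_, ?_⟩ <;> simp [cvecT_leaf, BT.size, pref]
  | node l r ihl ihr =>
    intro a ha
    obtain ⟨hL1, hL2, hL3⟩ := ihl a ha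
    obtain ⟨hR1, hR2, hR3⟩ := ihr (a + l.size + 1) (by omega)
    have hsz : (BT.node l r).size = l.size + r.size + 1 := rfl
    have hcast : ((a:ℤ) + l.size + 1) = ((a + l.size + 1 : ℕ) : ℤ) := by push_cast; omega
    have hnode : cvecT (BT.node l r) (a:ℤ)
        = Finsupp.single a 1 + cvecT l (a:ℤ) + cvecT r ((a + l.size + 1 : ℕ) : ℤ) := by
      rw [cvecT_node, hcast, Int.toNat_natCast]
    have hLsupp : ∀ i, cvecT l (a:ℤ) i ≠ 0 → a ≤ i ∧ i < a + l.size := fun i hi =>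
      cvecT_supp_bound l a i hi
    have hRsupp : ∀ i, cvecT r ((a + l.size + 1 : ℕ) : ℤ) i ≠ 0 →
        a + l.size + 1 ≤ i ∧ i < a + l.size + 1 + r.size := fun i hi =>
      cvecT_supp_bound r (a + l.size + 1) i hi
    have hprefL_tail : ∀ j, l.size ≤ j → pref (cvecT l (a:ℤ)) a j = l.size := by
      intro j hj
      rw [pref_supp_bound (cvecT l (a:ℤ)) a j
        (fun i hi => by have := hLsupp i (Finsupp.mem_support_iff.mp hi); omega)
        (fun i hi => by by_contra hne; have := hLsupp i hne; omega)]
      exact cvecT_total l (a:ℤ)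
    have hprefR_zero : ∀ j, j ≤ l.size + 1 → pref (cvecT r ((a + l.size + 1 : ℕ) : ℤ)) a j = 0 := by
      intro j hj
      exact pref_zero_of_supp_ge _ a j (a + l.size + 1) (fun i hi => (hRsupp i hi).1) (by omega)
    have hprefR_tail : ∀ j, l.size + 1 ≤ j →
        pref (cvecT r ((a + l.size + 1 : ℕ) : ℤ)) a j
          = pref (cvecT r ((a + l.size + 1 : ℕ) : ℤ)) (a + l.size + 1) (j - l.size - 1) := by
      intro j hj
      have h1 := pref_add_right (cvecT r ((a + l.size + 1 : ℕ) : ℤ)) a (l.size + 1) (j - l.size - 1)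
      rw [show l.size + 1 + (j - l.size - 1) = j by omega] at h1
      rw [h1, hprefR_zero (l.size + 1) le_rfl, show a + (l.size + 1) = a + l.size + 1 by omega]
      omega
    have key : ∀ j, pref (cvecT (BT.node l r) (a:ℤ)) a j
        = (if 1 ≤ j then 1 else 0) + pref (cvecT l (a:ℤ)) a j
          + pref (cvecT r ((a + l.size + 1 : ℕ) : ℤ)) a j := by
      intro j
      rw [hnode, pref_add, pref_add, pref_single_self]
    refine ⟨?_, ?_, ?_⟩
    · intro j hj
      rw [key]
      rw [hsz] at hj
      rcases Nat.lt_or_ge j (l.size + 1) with h' | h'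
      · have := hL1 j (by omega)
        omega
      · have h1 := hprefL_tail j (by omega)
        have h2 := hprefR_tail j (by omega)
        have h3 := hR1 (j - l.size - 1) (by omega)
        rw [if_pos (show 1 ≤ j by omega)]
        omega
    · rw [key, hsz, if_pos (show 1 ≤ l.size + r.size + 1 by omega)]
      have h1 := hprefL_tail (l.size + r.size + 1) (by omega)
      have h2 := hprefR_tail (l.size + r.size + 1) (by omega)
      rw [show l.size + r.size + 1 - l.size - 1 = r.size by omega] at h2
      omega
    · intro j hj hpj
      rw [key] at hpj
      rw [hsz] at hj
      rcases Nat.eq_zero_or_pos j with h0 | h0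
      · subst h0
        rw [Nat.add_zero]
        exact cvecT_node_pos l r a
      · rw [if_pos (show 1 ≤ j by omega)] at hpj
        rcases Nat.lt_or_ge j (l.size + 1) with h' | h'
        · have := hL1 j (by omega)
          have := hprefR_zero j (by omega)
          omega
        · have h1 := hprefL_tail j (by omega)
          have h2 := hprefR_tail j (by omega)
          have h3 := hR1 (j - l.size - 1) (by omega)
          have h4 : pref (cvecT r ((a + l.size + 1 : ℕ) : ℤ)) (a + l.size + 1) (j - l.size - 1)
              = j - l.size - 1 := by omega
          have h5 := hR3 (j - l.size - 1) (by omega) h4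
          rw [show a + l.size + 1 + (j - l.size - 1) = a + j by omega] at h5
          rw [hnode]
          simp only [Finsupp.add_apply]
          omega

lemma tree_unique : ∀ (t t' : BT) (a : ℕ), 1 ≤ a →
    cvecT t (a:ℤ) = cvecT t' (a:ℤ) → t = t' := by
  have hone : ∀ (l r : BT) (a : ℕ), (cvecT (BT.node l r) (a:ℤ)) a ≠ 0 :=
    fun l r a => cvecT_node_pos l r a
  have hblk : ∀ (l₀ r₀ : BT) (a : ℕ), 1 ≤ a →
      blk (cvecT l₀ (a:ℤ) + cvecT r₀ ((a + l₀.size + 1 : ℕ) : ℤ)) a = l₀.size := by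
    intro l₀ r₀ a ha
    have hLs : ∀ i, cvecT l₀ (a:ℤ) i ≠ 0 → a ≤ i ∧ i < a + l₀.size := fun i hi =>
      cvecT_supp_bound l₀ a i hi
    have hRs : ∀ i, cvecT r₀ ((a + l₀.size + 1 : ℕ) : ℤ) i ≠ 0 →
        a + l₀.size + 1 ≤ i ∧ i < a + l₀.size + 1 + r₀.size := fun i hi =>
      cvecT_supp_bound r₀ (a + l₀.size + 1) i hi
    obtain ⟨hP1, hP2, hP3⟩ := treeP l₀ a ha
    have hprefR0 : ∀ j, j ≤ l₀.size + 1 →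
        pref (cvecT r₀ ((a + l₀.size + 1 : ℕ) : ℤ)) a j = 0 := fun j hj =>
      pref_zero_of_supp_ge _ a j (a + l₀.size + 1) (fun i hi => (hRs i hi).1) (by omega)
    apply blk_eq_of
    · constructor
      · rw [pref_add, hP2, hprefR0 l₀.size (by omega)]
        omega
      · simp only [Finsupp.add_apply]
        have h1 : cvecT l₀ (a:ℤ) (a + l₀.size) = 0 := by
          by_contra hc
          have := hLs _ hc
          omega
        have h2 : cvecT r₀ ((a + l₀.size + 1 : ℕ) : ℤ) (a + l₀.size) = 0 := by
          by_contra hc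
          have := hRs _ hc
          omega
        omega
    · intro j hj hcond
      obtain ⟨hc1, hc2⟩ := hcond
      rw [pref_add, hprefR0 j (by omega)] at hc1
      have h3 := hP1 j (by omega)
      have h4 : pref (cvecT l₀ (a:ℤ)) a j = j := by omega
      have h5 := hP3 j (by omega) h4
      simp only [Finsupp.add_apply] at hc2
      omega
  intro t
  induction t with
  | leaf =>
    intro t' a ha h
    cases t' with
    | leaf => rfl
    | node l' r' =>
      exfalso
      have h2 := hone l' r' a
      rw [← h, cvecT_leaf] at h2
      simp at h2
  | node l r ihl ihr =>
    intro t' a ha h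
    cases t' with
    | leaf =>
      exfalso
      have h2 := hone l r a
      rw [h, cvecT_leaf] at h2
      simp at h2
    | node l' r' =>
      have hcast : ((a:ℤ) + l.size + 1) = ((a + l.size + 1 : ℕ) : ℤ) := by push_cast; omega
      have hcast' : ((a:ℤ) + l'.size + 1) = ((a + l'.size + 1 : ℕ) : ℤ) := by push_cast; omega
      have hnode : cvecT (BT.node l r) (a:ℤ)
          = Finsupp.single a 1 + (cvecT l (a:ℤ) + cvecT r ((a + l.size + 1 : ℕ) : ℤ)) := by
        rw [cvecT_node, hcast, Int.toNat_natCast, add_assoc]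
      have hnode' : cvecT (BT.node l' r') (a:ℤ)
          = Finsupp.single a 1 + (cvecT l' (a:ℤ) + cvecT r' ((a + l'.size + 1 : ℕ) : ℤ)) := by
        rw [cvecT_node, hcast', Int.toNat_natCast, add_assoc]
      rw [hnode, hnode'] at h
      have hsum : cvecT l (a:ℤ) + cvecT r ((a + l.size + 1 : ℕ) : ℤ)
          = cvecT l' (a:ℤ) + cvecT r' ((a + l'.size + 1 : ℕ) : ℤ) := add_left_cancel h
      have hss : l.size = l'.size := by
        have e1 := hblk l r a ha
        have e2 := hblk l' r' a ha
        rw [hsum] at e1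
        rw [e1] at e2
        exact e2
      have hLs : ∀ i, cvecT l (a:ℤ) i ≠ 0 → a ≤ i ∧ i < a + l.size := fun i hi =>
        cvecT_supp_bound l a i hi
      have hLs' : ∀ i, cvecT l' (a:ℤ) i ≠ 0 → a ≤ i ∧ i < a + l'.size := fun i hi =>
        cvecT_supp_bound l' a i hi
      have hRs : ∀ i, cvecT r ((a + l.size + 1 : ℕ) : ℤ) i ≠ 0 →
          a + l.size + 1 ≤ i ∧ i < a + l.size + 1 + r.size := fun i hi =>
        cvecT_supp_bound r (a + l.size + 1) i hi
      have hRs' : ∀ i, cvecT r' ((a + l'.size + 1 : ℕ) : ℤ) i ≠ 0 →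
          a + l'.size + 1 ≤ i ∧ i < a + l'.size + 1 + r'.size := fun i hi =>
        cvecT_supp_bound r' (a + l'.size + 1) i hi
      have hLeq : cvecT l (a:ℤ) = cvecT l' (a:ℤ) := by
        ext i
        have happ := DFunLike.congr_fun hsum i
        simp only [Finsupp.add_apply] at happ
        rcases Nat.lt_or_ge i (a + l.size) with h' | h'
        · have h1 : cvecT r ((a + l.size + 1 : ℕ) : ℤ) i = 0 := by
            by_contra hc; have := hRs i hc; omega
          have h2 : cvecT r' ((a + l'.size + 1 : ℕ) : ℤ) i = 0 := by
            by_contra hc; have := hRs' i hc; omega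
          omega
        · have h1 : cvecT l (a:ℤ) i = 0 := by
            by_contra hc; have := hLs i hc; omega
          have h2 : cvecT l' (a:ℤ) i = 0 := by
            by_contra hc; have := hLs' i hc; omega
          omega
      have hReq : cvecT r ((a + l.size + 1 : ℕ) : ℤ) = cvecT r' ((a + l'.size + 1 : ℕ) : ℤ) := by
        rw [hLeq] at hsum
        exact add_left_cancel hsum
      rw [← hss] at hReq
      have hl := ihl l' a ha hLeq
      have hr := ihr r' (a + l.size + 1) (by omega) hReq
      rw [hl, hr]

lemma chain_lb : ∀ (ts : List (ℤ × BT)) (p : ℤ × BT),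
    (p :: ts).Chain' (fun p q => p.1 + (p.2.size : ℤ) + 1 ≤ q.1) →
    ∀ q ∈ ts, p.1 + (p.2.size : ℤ) + 1 ≤ q.1 := by
  intro ts
  induction ts with
  | nil => intro p _ q hq; simp at hq
  | cons p' ts ih =>
    intro p hchain q hq
    have h1 : p.1 + (p.2.size : ℤ) + 1 ≤ p'.1 := (List.isChain_cons_cons.mp hchain).1
    rcases List.mem_cons.mp hq with h' | h'
    · subst h'; exact h1
    · have := ih p' (List.isChain_cons_cons.mp hchain).2 q h'
      have hpos : (0:ℤ) ≤ (p'.2.size : ℤ) := by positivity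
      omega

lemma cvecL_zero_lt (ts : List (ℤ × BT)) (h1 : ∀ q ∈ ts, (1:ℤ) ≤ q.1) (i : ℕ)
    (h2 : ∀ q ∈ ts, (i : ℤ) < q.1) : cvecL ts i = 0 := by
  induction ts with
  | nil => simp
  | cons p ts ih =>
    rw [cvecL_cons]
    simp only [Finsupp.add_apply]
    have hp1 : (1:ℤ) ≤ p.1 := h1 p (by simp)
    have hb : p.1 = ((p.1.toNat : ℕ) : ℤ) := by omega
    have hz : cvecT p.2 p.1 i = 0 := by
      by_contra hc
      rw [hb] at hc
      have := cvecT_supp_bound p.2 p.1.toNat i hc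
      have := h2 p (by simp)
      omega
    rw [hz, ih (fun q hq => h1 q (by simp [hq])) (fun q hq => h2 q (by simp [hq]))]

lemma total_cvecL_cons (p : ℤ × BT) (ts : List (ℤ × BT)) :
    (cvecL (p :: ts)).sum (fun _ v => v)
      = p.2.size + (cvecL ts).sum (fun _ v => v) := by
  rw [cvecL_cons, total_add, cvecT_total]

lemma list_unique : ∀ (ts ts' : List (ℤ × BT)),
    (∀ p ∈ ts, p.2 ≠ BT.leaf ∧ (1:ℤ) ≤ p.1) →
    ts.Chain' (fun p q => p.1 + (p.2.size : ℤ) + 1 ≤ q.1) →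
    (∀ p ∈ ts', p.2 ≠ BT.leaf ∧ (1:ℤ) ≤ p.1) →
    ts'.Chain' (fun p q => p.1 + (p.2.size : ℤ) + 1 ≤ q.1) →
    cvecL ts = cvecL ts' → ts = ts' := by
  intro ts
  induction ts with
  | nil =>
    intro ts' _ _ hv' _ h
    cases ts' with
    | nil => rfl
    | cons p' rest' =>
      exfalso
      have h1 : (cvecL ((p' :: rest' : List (ℤ × BT)))).sum (fun _ v => v) = 0 := by
        rw [← h]
        simp [cvecL_nil]
      rw [total_cvecL_cons] at h1
      have := BT_size_pos (hv' p' (by simp)).1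
      omega
  | cons p ts ih =>
    intro ts' hv hchain hv' hchain' h
    cases ts' with
    | nil =>
      exfalso
      have h1 : (cvecL ((p :: ts : List (ℤ × BT)))).sum (fun _ v => v) = 0 := by
        rw [h]
        simp [cvecL_nil]
      rw [total_cvecL_cons] at h1
      have := BT_size_pos (hv p (by simp)).1
      omega
    | cons p' ts' =>
      -- basic data
      have hp := hv p (by simp)
      have hp' := hv' p' (by simp)
      obtain ⟨b, hb⟩ : ∃ b : ℕ, p.1 = (b : ℤ) := ⟨p.1.toNat, by omega⟩
      obtain ⟨b', hb'⟩ : ∃ b' : ℕ, p'.1 = (b' : ℤ) := ⟨p'.1.toNat, by omega⟩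
      have hb1 : 1 ≤ b := by omega
      have hb1' : 1 ≤ b' := by omega
      have hn1 : 1 ≤ p.2.size := BT_size_pos hp.1
      have hn1' : 1 ≤ p'.2.size := BT_size_pos hp'.1
      have htail : ∀ q ∈ ts, (1:ℤ) ≤ q.1 := fun q hq => (hv q (by simp [hq])).2
      have htail' : ∀ q ∈ ts', (1:ℤ) ≤ q.1 := fun q hq => (hv' q (by simp [hq])).2
      have hgap : ∀ q ∈ ts, p.1 + (p.2.size : ℤ) + 1 ≤ q.1 := chain_lb ts p hchain
      have hgap' : ∀ q ∈ ts', p'.1 + (p'.2.size : ℤ) + 1 ≤ q.1 := chain_lb ts' p' hchain'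
      -- the vectors of heads based at the natural number b
      have hhead : cvecT p.2 p.1 = cvecT p.2 ((b:ℕ):ℤ) := by rw [← hb]
      have hhead' : cvecT p'.2 p'.1 = cvecT p'.2 ((b':ℕ):ℤ) := by rw [← hb']
      -- zero of tails below their starts
      have htz : ∀ i : ℕ, i < b + p.2.size + 1 → cvecL ts i = 0 := by
        intro i hi
        refine cvecL_zero_lt ts htail i (fun q hq => ?_)
        have := hgap q hq
        omega
      have htz' : ∀ i : ℕ, i < b' + p'.2.size + 1 → cvecL ts' i = 0 := by
        intro i hi
        refine cvecL_zero_lt ts' htail' i (fun q hq => ?_)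
        have := hgap' q hq
        omega
      have hsuppT : ∀ i, cvecT p.2 ((b:ℕ):ℤ) i ≠ 0 → b ≤ i ∧ i < b + p.2.size := fun i hi =>
        cvecT_supp_bound p.2 b i hi
      have hsuppT' : ∀ i, cvecT p'.2 ((b':ℕ):ℤ) i ≠ 0 → b' ≤ i ∧ i < b' + p'.2.size :=
        fun i hi => cvecT_supp_bound p'.2 b' i hi
      -- c and its decompositions
      have hcdec : cvecL (p :: ts) = cvecT p.2 ((b:ℕ):ℤ) + cvecL ts := by
        rw [cvecL_cons, hhead]
      have hcdec' : cvecL (p' :: ts') = cvecT p'.2 ((b':ℕ):ℤ) + cvecL ts' := by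
        rw [cvecL_cons, hhead']
      -- b = b' : both are the minimum of the support
      have hmin : ∀ i : ℕ, i < b → cvecL (p :: ts) i = 0 := by
        intro i hi
        rw [hcdec]
        simp only [Finsupp.add_apply]
        have h1 : cvecT p.2 ((b:ℕ):ℤ) i = 0 := by
          by_contra hc
          have := hsuppT i hc
          omega
        have h2 := htz i (by omega)
        omega
      have hmin' : ∀ i : ℕ, i < b' → cvecL (p' :: ts') i = 0 := by
        intro i hi
        rw [hcdec']
        simp only [Finsupp.add_apply]
        have h1 : cvecT p'.2 ((b':ℕ):ℤ) i = 0 := by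
          by_contra hc
          have := hsuppT' i hc
          omega
        have h2 := htz' i (by omega)
        omega
      have hvalb : cvecL (p :: ts) b ≠ 0 := by
        rw [hcdec]
        simp only [Finsupp.add_apply]
        obtain ⟨l, r, hlr⟩ : ∃ l r, p.2 = BT.node l r := by
          cases hpt : p.2 with
          | leaf => exact absurd hpt hp.1
          | node l r => exact ⟨l, r, rfl⟩
        rw [hlr]
        have := cvecT_node_pos l r b
        omega
      have hvalb' : cvecL (p' :: ts') b' ≠ 0 := by
        rw [hcdec']
        simp only [Finsupp.add_apply]
        obtain ⟨l, r, hlr⟩ : ∃ l r, p'.2 = BT.node l r := by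
          cases hpt : p'.2 with
          | leaf => exact absurd hpt hp'.1
          | node l r => exact ⟨l, r, rfl⟩
        rw [hlr]
        have := cvecT_node_pos l r b'
        omega
      have hbb : b = b' := by
        by_contra hne
        rcases Nat.lt_or_ge b b' with h' | h'
        · exact hvalb (h ▸ hmin' b h')
        · exact hvalb' (h.symm ▸ hmin b' (by omega))
      subst hbb
      -- blk identifies the head sizes
      have hblkgen : ∀ (t₀ : BT) (rest₀ : ℕ →₀ ℕ), t₀ ≠ BT.leaf →
          (∀ i : ℕ, i < b + t₀.size + 1 → rest₀ i = 0) →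
          blk (cvecT t₀ ((b:ℕ):ℤ) + rest₀) b = t₀.size := by
        intro t₀ rest₀ _ hz
        obtain ⟨hP1, hP2, hP3⟩ := treeP t₀ b hb1
        have hsupp := fun i hi => cvecT_supp_bound t₀ b i hi
        have hpz : ∀ j, j ≤ t₀.size → pref rest₀ b j = 0 := by
          intro j hj
          apply Finset.sum_eq_zero
          intro i hi
          have := Finset.mem_range.mp hi
          exact hz (b + i) (by omega)
        apply blk_eq_of
        · constructor
          · rw [pref_add, hP2, hpz t₀.size le_rfl]
            omega
          · simp only [Finsupp.add_apply]
            have h1 : cvecT t₀ ((b:ℕ):ℤ) (b + t₀.size) = 0 := by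
              by_contra hc
              have := hsupp _ hc
              omega
            have h2 := hz (b + t₀.size) (by omega)
            omega
        · intro j hj hcond
          obtain ⟨hc1, hc2⟩ := hcond
          rw [pref_add, hpz j (by omega)] at hc1
          have h3 := hP1 j (by omega)
          have h4 : pref (cvecT t₀ ((b:ℕ):ℤ)) b j = j := by omega
          have h5 := hP3 j (by omega) h4
          simp only [Finsupp.add_apply] at hc2
          have h6 := hz (b + j) (by omega)
          omega
      have hsz : p.2.size = p'.2.size := by
        have e1 := hblkgen p.2 (cvecL ts) hp.1 htz
        have e2 := hblkgen p'.2 (cvecL ts') hp'.1 htz'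
        rw [← hcdec] at e1
        rw [← hcdec', ← h] at e2
        omega
      -- head vectors agree
      have hTeq : cvecT p.2 ((b:ℕ):ℤ) = cvecT p'.2 ((b:ℕ):ℤ) := by
        ext i
        have happ := DFunLike.congr_fun h i
        rw [hcdec, hcdec'] at happ
        simp only [Finsupp.add_apply] at happ
        rcases Nat.lt_or_ge i (b + p.2.size) with h' | h'
        · have h1 := htz i (by omega)
          have h2 := htz' i (by omega)
          omega
        · have h1 : cvecT p.2 ((b:ℕ):ℤ) i = 0 := by
            by_contra hc
            have := hsuppT i hc
            omega
          have h2 : cvecT p'.2 ((b:ℕ):ℤ) i = 0 := by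
            by_contra hc
            have := hsuppT' i hc
            omega
          omega
      have hteq : p.2 = p'.2 := tree_unique p.2 p'.2 b hb1 hTeq
      have hpeq : p = p' := by
        have h1 : p.1 = p'.1 := by rw [hb, hb']
        exact Prod.ext h1 hteq
      -- tails agree
      have htaileq : cvecL ts = cvecL ts' := by
        have h2 : cvecT p.2 ((b:ℕ):ℤ) + cvecL ts = cvecT p'.2 ((b:ℕ):ℤ) + cvecL ts' := by
          rw [← hcdec, ← hcdec', h]
        rw [← hTeq] at h2
        exact add_left_cancel h2
      rw [hpeq, ih ts' (fun q hq => hv q (by simp [hq])) hchain.tail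
        (fun q hq => hv' q (by simp [hq])) hchain'.tail htaileq]

/-! ### The revlex order -/

/-- Reverse lexicographic comparison: `m` is smaller than `c`. -/
def rl (m c : ℕ →₀ ℕ) : Prop := ∃ i : ℕ, (∀ j, i < j → m j = c j) ∧ m i < c i

lemma rl_irrefl (m : ℕ →₀ ℕ) : ¬ rl m m := by
  rintro ⟨i, _, hlt⟩
  omega

lemma rl_trans {m c d : ℕ →₀ ℕ} (h1 : rl m c) (h2 : rl c d) : rl m d := by
  obtain ⟨i1, ha1, hl1⟩ := h1
  obtain ⟨i2, ha2, hl2⟩ := h2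
  rcases Nat.lt_trichotomy i1 i2 with h | h | h
  · refine ⟨i2, fun j hj => ?_, ?_⟩
    · rw [ha1 j (by omega), ha2 j hj]
    · rw [ha1 i2 (by omega)]; exact hl2
  · subst h
    exact ⟨i1, fun j hj => by rw [ha1 j hj, ha2 j hj], by omega⟩
  · refine ⟨i1, fun j hj => ?_, ?_⟩
    · rw [ha1 j hj, ha2 j (by omega)]
    · rw [← ha2 i1 (by omega)]; exact hl1
lemma rl_asymm {m c : ℕ →₀ ℕ} (h1 : rl m c) (h2 : rl c m) : False :=
  rl_irrefl m (rl_trans h1 h2)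

lemma rl_total {m c : ℕ →₀ ℕ} (h : m ≠ c) : rl m c ∨ rl c m := by
  have hd : ((m.support ∪ c.support).filter (fun j => m j ≠ c j)).Nonempty := by
    by_contra hempty
    apply h
    ext j
    by_contra hj
    have hj1 : j ∈ m.support ∪ c.support := by
      rcases Nat.eq_zero_or_pos (m j) with h0 | h0
      · exact Finset.mem_union_right _ (Finsupp.mem_support_iff.mpr (by omega))
      · exact Finset.mem_union_left _ (Finsupp.mem_support_iff.mpr (by omega))
    exact hempty ⟨j, Finset.mem_filter.mpr ⟨hj1, hj⟩⟩
  set i := ((m.support ∪ c.support).filter (fun j => m j ≠ c j)).max' hd with hi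
  have hgt : ∀ j, i < j → m j = c j := by
    intro j hj
    by_contra hj'
    have hj1 : j ∈ (m.support ∪ c.support).filter (fun j => m j ≠ c j) := by
      refine Finset.mem_filter.mpr ⟨?_, hj'⟩
      rcases Nat.eq_zero_or_pos (m j) with h0 | h0
      · exact Finset.mem_union_right _ (Finsupp.mem_support_iff.mpr (by omega))
      · exact Finset.mem_union_left _ (Finsupp.mem_support_iff.mpr (by omega))
    exact absurd (Finset.le_max' _ j hj1) (by omega)
  have hne : m i ≠ c i := (Finset.mem_filter.mp (Finset.max'_mem _ hd)).2
  rcases Nat.lt_or_ge (m i) (c i) with h' | h'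
  · exact Or.inl ⟨i, hgt, h'⟩
  · exact Or.inr ⟨i, fun j hj => (hgt j hj).symm, by omega⟩

/-- Every nonempty finite set has an `rl`-maximal element. -/
lemma exists_rl_max (s : Finset (ℕ →₀ ℕ)) (hs : s.Nonempty) :
    ∃ M ∈ s, ∀ m ∈ s, m ≠ M → rl m M := by
  classical
  induction s using Finset.induction_on with
  | empty => exact absurd hs (by simp)
  | @insert a s' ha ih =>
    rcases s'.eq_empty_or_nonempty with hs' | hs'
    · subst hs'
      exact ⟨a, by simp, fun m hm hne => absurd (Finset.mem_singleton.mp (by simpa using hm)) hne⟩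
    · obtain ⟨M, hM, hmax⟩ := ih hs'
      by_cases haM : a = M
      · subst haM
        refine ⟨a, Finset.mem_insert_self a s', fun m hm hne => ?_⟩
        have hm' : m ∈ s' := by
          rcases Finset.mem_insert.mp hm with h | h
          · exact absurd h hne
          · exact h
        exact hmax m hm' hne
      · rcases rl_total haM with h' | h'
        · refine ⟨M, Finset.mem_insert_of_mem hM, fun m hm hne => ?_⟩
          rcases Finset.mem_insert.mp hm with h | h
          · subst h; exact h'
          · exact hmax m h hne
        · refine ⟨a, Finset.mem_insert_self a s', fun m hm hne => ?_⟩
          rcases Finset.mem_insert.mp hm with h | h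
          · exact absurd h hne
          · by_cases hmM : m = M
            · subst hmM; exact h'
            · exact rl_trans (hmax m h hmM) h'

/-- Bounded revlex relation. -/
def rlB (N : ℕ) (x m : ℕ →₀ ℕ) : Prop :=
  rl x m ∧ (∀ j, N ≤ j → x j = 0) ∧ (∀ j, N ≤ j → m j = 0)

lemma rlB_wf : ∀ N, WellFounded (rlB N) := by
  intro N
  induction N with
  | zero =>
    constructor
    intro m
    constructor
    intro x hx
    exfalso
    obtain ⟨⟨i, _, hlt⟩, _, hm⟩ := hx
    rw [hm i (by omega)] at hlt
    omega
  | succ N ih =>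
    have hwf : WellFounded (Prod.Lex (· < · : ℕ → ℕ → Prop) (rlB N)) :=
      WellFounded.prod_lex (Nat.lt_wfRel.wf) ih
    have hsub : ∀ x m, rlB (N+1) x m →
        Prod.Lex (· < ·) (rlB N) (x N, x.erase N) (m N, m.erase N) := by
      intro x m ⟨⟨i, hagree, hlt⟩, hx, hm⟩
      have hiN : i ≤ N := by
        by_contra hc
        rw [hm i (by omega)] at hlt
        omega
      rcases Nat.lt_or_ge i N with hi | hi
      · have hxm : x N = m N := hagree N (by omega)
        rw [hxm]
        apply Prod.Lex.right
        refine ⟨⟨i, fun j hj => ?_, ?_⟩, ?_, ?_⟩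
        · by_cases hjN : j = N
          · subst hjN; rw [Finsupp.erase_apply, Finsupp.erase_apply]; simp
          · rw [Finsupp.erase_apply, Finsupp.erase_apply, if_neg hjN, if_neg hjN]
            exact hagree j hj
        · rw [Finsupp.erase_apply, Finsupp.erase_apply, if_neg (by omega), if_neg (by omega)]
          exact hlt
        · intro j hj
          rw [Finsupp.erase_apply]
          by_cases hjN : j = N
          · rw [if_pos hjN]
          · rw [if_neg hjN]; exact hx j (by omega)
        · intro j hj
          rw [Finsupp.erase_apply]
          by_cases hjN : j = N
          · rw [if_pos hjN]
          · rw [if_neg hjN]; exact hm j (by omega)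
      · have hiN' : i = N := by omega
        subst hiN'
        exact Prod.Lex.left _ _ hlt
    have hinv : WellFounded (InvImage (Prod.Lex (· < · : ℕ → ℕ → Prop) (rlB N))
        (fun m : ℕ →₀ ℕ => ((m N, m.erase N) : ℕ × (ℕ →₀ ℕ)))) :=
      InvImage.wf _ hwf
    exact Subrelation.wf (fun {x m} h => hsub x m h) hinv

lemma rl_acc_aux : ∀ (N : ℕ) (m : ℕ →₀ ℕ), Acc (rlB N) m → (∀ j, N ≤ j → m j = 0) →
    Acc rl m := by
  intro N m hacc
  induction hacc with
  | intro y hy ih =>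
    intro hbound
    constructor
    intro x hx
    have hxbound : ∀ j, N ≤ j → x j = 0 := by
      obtain ⟨i, hagree, hlt⟩ := hx
      have hiN : i < N := by
        by_contra hc
        rw [hbound i (by omega)] at hlt
        omega
      intro j hj
      rw [hagree j (by omega)]
      exact hbound j hj
    exact ih x ⟨hx, hxbound, hbound⟩ hxbound

lemma rl_wf : WellFounded rl := by
  constructor
  intro m
  have hN : ∀ j, (m.support.sup id + 1) ≤ j → m j = 0 := by
    intro j hj
    by_contra hc
    have := Finset.le_sup (f := id) (Finsupp.mem_support_iff.mpr hc)
    simp only [id] at this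
    omega
  exact rl_acc_aux _ m ((rlB_wf _).apply m) hN

/-! ### Bridges to `IndexedForest` -/

lemma starts_pos (F : IndexedForest) (hpos : ∀ i ∈ F.Supp, 1 ≤ i) :
    ∀ p ∈ F.trees, (1:ℤ) ≤ p.1 := by
  intro p hp
  have hne := F.nonempty p hp
  have hsz := BT_size_pos hne
  apply hpos
  refine ⟨p, hp, le_refl _, ?_⟩
  omega

lemma count_bridge : ∀ (ts : List (ℤ × BT)), (∀ p ∈ ts, (1:ℤ) ≤ p.1) → ∀ i : ℕ,
    cvecL ts i = Multiset.count (i:ℤ) (List.map (fun p : ℤ × BT => p.2.rhoMS p.1) ts).sum := by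
  intro ts
  induction ts with
  | nil => intro _ i; simp
  | cons p ts ih =>
    intro h i
    rw [cvecL_cons]
    simp only [List.map_cons, List.sum_cons, Multiset.count_add, Finsupp.add_apply]
    rw [cvecT_apply p.2 p.1 (h p (by simp)) i, ih (fun q hq => h q (by simp [hq])) i]

lemma valid_of_forest (F : IndexedForest) (hpos : ∀ i ∈ F.Supp, 1 ≤ i) :
    ∀ p ∈ F.trees, p.2 ≠ BT.leaf ∧ (1:ℤ) ≤ p.1 := fun p hp =>
  ⟨F.nonempty p hp, starts_pos F hpos p hp⟩

lemma forest_ext {F F' : IndexedForest} (h : F.trees = F'.trees) : F = F' := by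
  cases F
  cases F'
  simp only at h
  subst h
  rfl

lemma key_eq (F : IndexedForest) (hpos : ∀ i ∈ F.Supp, 1 ≤ i) (cF : ℕ →₀ ℕ)
    (hcF : ∀ i : ℕ, cF i = cOf F (i : ℤ)) : cF = cvecL F.trees := by
  ext i
  rw [hcF i, count_bridge F.trees (starts_pos F hpos) i]
  rfl

lemma part3 (F : IndexedForest) (hpos : ∀ i ∈ F.Supp, 1 ≤ i) (cF : ℕ →₀ ℕ)
    (hcF : ∀ i : ℕ, cF i = cOf F (i : ℤ)) :
    MvPolynomial.coeff cF F.poly = 1 ∧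
      ∀ m ∈ F.poly.support, m ≠ cF →
        ∃ i : ℕ, (∀ j : ℕ, i < j → m j = cF j) ∧ m i < cF i := by
  have hst := starts_pos F hpos
  have hkey := key_eq F hpos cF hcF
  rw [hkey]
  have hpoly : F.poly = polyL F.trees := rfl
  rw [hpoly]
  exact ⟨coeff_cvecL F.trees hst, leading F.trees hst⟩

/-- The family of forest polynomials. -/
noncomputable def fam : {F : IndexedForest // ∀ i ∈ F.Supp, 1 ≤ i} → MvPolynomial ℕ ℚ :=
  fun F => F.1.poly

/-- The revlex key of a positively supported forest. -/
noncomputable def key (F : {F : IndexedForest // ∀ i ∈ F.Supp, 1 ≤ i}) : ℕ →₀ ℕ :=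
  cvecL F.1.trees

lemma key_inj : Function.Injective key := by
  intro F F' h
  have h1 := valid_of_forest F.1 F.2
  have h2 := valid_of_forest F'.1 F'.2
  have := list_unique F.1.trees F'.1.trees h1 F.1.gaps h2 F'.1.gaps h
  exact Subtype.ext (forest_ext this)

lemma coeff_key (F : {F : IndexedForest // ∀ i ∈ F.Supp, 1 ≤ i}) :
    MvPolynomial.coeff (key F) (fam F) = 1 :=
  coeff_cvecL F.1.trees (starts_pos F.1 F.2)

lemma supp_fam (F : {F : IndexedForest // ∀ i ∈ F.Supp, 1 ≤ i}) :
    ∀ m ∈ (fam F).support, m = key F ∨ rl m (key F) := by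
  intro m hm
  by_cases h : m = key F
  · exact Or.inl h
  · exact Or.inr (leading F.1.trees (starts_pos F.1 F.2) m hm h)

lemma part1 : LinearIndependent ℚ fam := by
  rw [linearIndependent_iff]
  intro l hl
  by_contra hl0
  have hsupp : l.support.Nonempty := Finsupp.support_nonempty_iff.mpr hl0
  have hkeys : (l.support.image key).Nonempty := hsupp.image key
  obtain ⟨K, hK, hmax⟩ := exists_rl_max _ hkeys
  obtain ⟨F0, hF0, hF0K⟩ := Finset.mem_image.mp hK
  have hco : MvPolynomial.coeff K (Finsupp.linearCombination ℚ fam l) = 0 := by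
    rw [hl]
    exact MvPolynomial.coeff_zero K
  rw [Finsupp.linearCombination_apply, Finsupp.sum, MvPolynomial.coeff_sum] at hco
  rw [Finset.sum_eq_single F0] at hco
  · rw [MvPolynomial.coeff_smul, ← hF0K, coeff_key F0] at hco
    simp only [smul_eq_mul, mul_one] at hco
    exact Finsupp.mem_support_iff.mp hF0 hco
  · intro F hF hne
    rw [MvPolynomial.coeff_smul]
    have hcoF : MvPolynomial.coeff K (fam F) = 0 := by
      by_contra hc
      have hmem : K ∈ (fam F).support := MvPolynomial.mem_support_iff.mpr hc
      rcases supp_fam F K hmem with h' | h'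
      · exact hne (key_inj (h'.symm ▸ hF0K.symm ▸ rfl : key F = key F0) ▸ rfl)
      · have hKF : key F ≠ K := by
          intro hKK
          exact hne (key_inj (hKK.trans hF0K.symm))
        have hkeymem : key F ∈ l.support.image key := Finset.mem_image_of_mem key hF
        exact rl_asymm h' (hmax (key F) hkeymem hKF)
    rw [hcoF]
    simp
  · intro hnot
    exact absurd hF0 hnot

lemma span_step :
    ∀ M : ℕ →₀ ℕ, (∀ M', rl M' M →
      (∀ f : MvPolynomial ℕ ℚ, (∀ m ∈ f.support, m 0 = 0) →
        (∀ m ∈ f.support, m = M' ∨ rl m M') →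
        f ∈ Submodule.span ℚ (Set.range fam))) →
    ∀ f : MvPolynomial ℕ ℚ, (∀ m ∈ f.support, m 0 = 0) →
      (∀ m ∈ f.support, m = M ∨ rl m M) →
      f ∈ Submodule.span ℚ (Set.range fam) := by
  intro M IH f h0 hbound
  by_cases hq : MvPolynomial.coeff M f = 0
  · by_cases hf : f = 0
    · subst hf; exact Submodule.zero_mem _
    · have hsupp : f.support.Nonempty := by
        exact MvPolynomial.support_nonempty.mpr hf
      obtain ⟨M', hM', hmax'⟩ := exists_rl_max f.support hsupp
      have hrl : rl M' M := by
        rcases hbound M' hM' with h' | h'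
        · exact absurd hq (h' ▸ MvPolynomial.mem_support_iff.mp hM')
        · exact h'
      refine IH M' hrl f h0 (fun m hm => ?_)
      by_cases hmM : m = M'
      · exact Or.inl hmM
      · exact Or.inr (hmax' m hm hmM)
  · have hM0 : M 0 = 0 := h0 M (MvPolynomial.mem_support_iff.mpr hq)
    obtain ⟨hne_trees, hchain, hcv, _⟩ :=
      mkL_spec (M.sum fun _ v => v) M le_rfl hM0
    set tsM := mkL (M.sum fun _ v => v) M with htsM
    set F : IndexedForest :=
      ⟨tsM, fun p hp => (hne_trees p hp).1, hchain⟩ with hF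
    have hFpos : ∀ i ∈ F.Supp, 1 ≤ i := by
      rintro i ⟨p, hp, h1, h2⟩
      have := (hne_trees p hp).2
      omega
    set Fs : {F : IndexedForest // ∀ i ∈ F.Supp, 1 ≤ i} := ⟨F, hFpos⟩ with hFs
    have hkeyF : key Fs = M := hcv
    set q := MvPolynomial.coeff M f with hqdef
    set g := fam Fs with hg
    have hgmem : g ∈ Submodule.span ℚ (Set.range fam) :=
      Submodule.subset_span ⟨Fs, rfl⟩
    have hcoeffg : MvPolynomial.coeff M g = 1 := by
      rw [← hkeyF]
      exact coeff_key Fs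
    set f' := f - q • g with hf'
    have hcoeff' : ∀ m, MvPolynomial.coeff m f'
        = MvPolynomial.coeff m f - q * MvPolynomial.coeff m g := by
      intro m
      rw [hf', MvPolynomial.coeff_sub, MvPolynomial.coeff_smul, smul_eq_mul]
    have hMnot : MvPolynomial.coeff M f' = 0 := by
      rw [hcoeff' M, hcoeffg]
      ring
    have hsupp' : ∀ m ∈ f'.support, m ≠ M ∧ rl m M := by
      intro m hm
      have hcm := MvPolynomial.mem_support_iff.mp hm
      have hmM : m ≠ M := fun hc => hcm (hc ▸ hMnot)
      refine ⟨hmM, ?_⟩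
      have : MvPolynomial.coeff m f ≠ 0 ∨ MvPolynomial.coeff m g ≠ 0 := by
        by_contra hc
        push_neg at hc
        rw [hcoeff' m, hc.1, hc.2] at hcm
        simp at hcm
      rcases this with h' | h'
      · rcases hbound m (MvPolynomial.mem_support_iff.mpr h') with h'' | h''
        · exact absurd h'' hmM
        · exact h''
      · have hmem := MvPolynomial.mem_support_iff.mpr h'
        rcases supp_fam Fs m hmem with h'' | h''
        · rw [hkeyF] at h''
          exact absurd h'' hmM
        · rw [hkeyF] at h''
          exact h''
    have h0' : ∀ m ∈ f'.support, m 0 = 0 := by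
      intro m hm
      have hcm := MvPolynomial.mem_support_iff.mp hm
      have : MvPolynomial.coeff m f ≠ 0 ∨ MvPolynomial.coeff m g ≠ 0 := by
        by_contra hc
        push_neg at hc
        rw [hcoeff' m, hc.1, hc.2] at hcm
        simp at hcm
      rcases this with h' | h'
      · exact h0 m (MvPolynomial.mem_support_iff.mpr h')
      · exact (supp_polyL F.trees (fun p hp => (hne_trees p hp).2) m
          (MvPolynomial.mem_support_iff.mpr h')).1
    have hf'span : f' ∈ Submodule.span ℚ (Set.range fam) := by
      by_cases hf'0 : f' = 0
      · rw [hf'0]; exact Submodule.zero_mem _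
      · have hsupp'' : f'.support.Nonempty := by
          exact MvPolynomial.support_nonempty.mpr hf'0
        obtain ⟨M'', hM'', hmax''⟩ := exists_rl_max f'.support hsupp''
        have hrl : rl M'' M := (hsupp' M'' hM'').2
        refine IH M'' hrl f' h0' (fun m hm => ?_)
        by_cases hmM : m = M''
        · exact Or.inl hmM
        · exact Or.inr (hmax'' m hm hmM)
    have : f = f' + q • g := by
      rw [hf']
      ring
    rw [this]
    exact Submodule.add_mem _ hf'span (Submodule.smul_mem _ q hgmem)

lemma part2 : ∀ f : MvPolynomial ℕ ℚ, (∀ m ∈ f.support, m 0 = 0) →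
    f ∈ Submodule.span ℚ (Set.range fam) := by
  have hall : ∀ M : ℕ →₀ ℕ,
      ∀ f : MvPolynomial ℕ ℚ, (∀ m ∈ f.support, m 0 = 0) →
        (∀ m ∈ f.support, m = M ∨ rl m M) →
        f ∈ Submodule.span ℚ (Set.range fam) := fun M =>
    rl_wf.induction M span_step
  intro f h0
  by_cases hf : f = 0
  · subst hf; exact Submodule.zero_mem _
  · have hsupp : f.support.Nonempty := by
      exact MvPolynomial.support_nonempty.mpr hf
    obtain ⟨M, hM, hmax⟩ := exists_rl_max f.support hsupp
    refine hall M f h0 (fun m hm => ?_)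
    by_cases hmM : m = M
    · exact Or.inl hmM
    · exact Or.inr (hmax m hm hmM)

end F9

/-- the forest polynomials `β_F`, `F` ranging over positively
supported indexed forests, form a basis of `ℚ[x_1, x_2, …]` (the subspace of
`MvPolynomial ℕ ℚ` of polynomials not involving the variable `X 0`):
they are linearly independent and span that space. Moreover `x^{c(F)}` is the
revlex leading term of `β_F`: its coefficient is `1` and every other monomial
`m` of `β_F` satisfies `m i < c(F) i` at the last index `i` where they differ. -/
theorem forest_polys_basis :
    LinearIndependent ℚ
      (fun F : {F : IndexedForest // ∀ i ∈ F.Supp, 1 ≤ i} => F.1.poly) ∧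
    (∀ f : MvPolynomial ℕ ℚ, (∀ m ∈ f.support, m 0 = 0) →
      f ∈ Submodule.span ℚ
        (Set.range (fun F : {F : IndexedForest // ∀ i ∈ F.Supp, 1 ≤ i} =>
          F.1.poly))) ∧
    (∀ F : IndexedForest, (∀ i ∈ F.Supp, 1 ≤ i) → ∀ cF : ℕ →₀ ℕ,
      (∀ i : ℕ, cF i = cOf F (i : ℤ)) →
      (MvPolynomial.coeff cF F.poly = 1 ∧
        ∀ m ∈ F.poly.support, m ≠ cF →
          ∃ i : ℕ, (∀ j : ℕ, i < j → m j = cF j) ∧ m i < cF i)) :=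
  ⟨F9.part1, F9.part2, F9.part3⟩
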